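/- Generalized Borel–Cantelli lemma: Let (Ω, ℬ, μ) be a probability space and (X_n)_{n≥1} a sequence of ℬ-measurable sets. Suppose there exist a positive integer d and a constant c > 1 such that μ(X_m ∩ X_n) < c·μ(X_m)·μ(X_n) for every m ≥ 1 and every n ≥ m + d. Then: (i) if Σ_{n=1}^∞ μ(X_n) = ∞, then μ(limsup_{n→∞} X_n) ≥ 1/(4c); and (ii) with no constraint on μ(X_m ∩ X_n), if Σ_{n=1}^∞ μ(X_n) < ∞, then μ(limsup_{n→∞} X_n) = 0. -/

import Mathlib

open MeasureTheory Filter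
open scoped ENNReal

-- Chung–Erdős inequality
lemma chung_erdos {Ω : Type*} [MeasurableSpace Ω] (μ : Measure Ω)
    (X : ℕ → Set Ω) (hmeas : ∀ n, MeasurableSet (X n)) (s : Finset ℕ) :
    (∑ i ∈ s, μ (X i)) * (∑ i ∈ s, μ (X i)) ≤
      μ (⋃ i ∈ s, X i) * ∑ i ∈ s, ∑ j ∈ s, μ (X i ∩ X j) := by
  classical
  set g : Ω → ℝ≥0∞ := fun ω => ∑ i ∈ s, (X i).indicator 1 ω with hg
  set U : Set Ω := ⋃ i ∈ s, X i with hU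
  have hUmeas : MeasurableSet U := MeasurableSet.biUnion s.countable_toSet fun i _ => hmeas i
  have hgmeas : Measurable g := by
    apply Finset.measurable_sum
    exact fun i _ => (measurable_one.indicator (hmeas i))
  have hkey : ∀ ω, g ω = U.indicator 1 ω * g ω := by
    intro ω
    by_cases hω : ω ∈ U
    · simp [Set.indicator_of_mem hω]
    · have : ∀ i ∈ s, ω ∉ X i := fun i hi h => hω (Set.mem_biUnion hi h)
      simp only [hg]
      rw [Finset.sum_eq_zero fun i hi => Set.indicator_of_notMem (this i hi) 1]
      simp
  have h1 : ∫⁻ ω, g ω ∂μ = ∑ i ∈ s, μ (X i) := by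
    rw [lintegral_finset_sum _ fun i _ => measurable_one.indicator (hmeas i)]
    simp_rw [lintegral_indicator_one (hmeas _)]
  have h2 : ∫⁻ ω, g ω * g ω ∂μ = ∑ i ∈ s, ∑ j ∈ s, μ (X i ∩ X j) := by
    have hgg : ∀ ω, g ω * g ω = ∑ i ∈ s, ∑ j ∈ s, (X i ∩ X j).indicator 1 ω := by
      intro ω
      simp only [hg, Finset.sum_mul_sum]
      refine Finset.sum_congr rfl fun i _ => Finset.sum_congr rfl fun j _ => ?_
      rw [Set.inter_indicator_one]; rfl
    simp_rw [hgg]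
    rw [lintegral_finset_sum _ fun i _ => Finset.measurable_sum _
      fun j _ => measurable_one.indicator ((hmeas i).inter (hmeas j))]
    refine Finset.sum_congr rfl fun i _ => ?_
    rw [lintegral_finset_sum _ fun j _ => measurable_one.indicator ((hmeas i).inter (hmeas j))]
    simp_rw [lintegral_indicator_one ((hmeas _).inter (hmeas _))]
  have hconj : Real.HolderConjugate 2 2 := Real.holderConjugate_iff.mpr ⟨one_lt_two, by norm_num⟩
  have holder := ENNReal.lintegral_mul_le_Lp_mul_Lq μ hconj
    ((measurable_one.indicator hUmeas).aemeasurable) hgmeas.aemeasurable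
  have hind2 : ∀ ω, (U.indicator (1 : Ω → ℝ≥0∞) ω) ^ (2:ℝ) = U.indicator 1 ω := by
    intro ω
    by_cases hω : ω ∈ U <;> simp [Set.indicator_of_mem, Set.indicator_of_notMem, hω,
      ENNReal.zero_rpow_of_pos, ENNReal.one_rpow]
  have hg2 : ∀ ω, g ω ^ (2:ℝ) = g ω * g ω := by
    intro ω
    rw [show (2:ℝ) = ((2:ℕ):ℝ) by norm_num, ENNReal.rpow_natCast, sq]
  simp_rw [Pi.mul_apply, hind2, hg2] at holder
  rw [lintegral_indicator_one hUmeas] at holder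
  have hS : ∫⁻ ω, U.indicator 1 ω * g ω ∂μ = ∑ i ∈ s, μ (X i) := by
    rw [← h1]; exact lintegral_congr fun ω => (hkey ω).symm
  rw [hS, h2] at holder
  calc (∑ i ∈ s, μ (X i)) * (∑ i ∈ s, μ (X i))
      ≤ (μ U ^ (1/(2:ℝ)) * (∑ i ∈ s, ∑ j ∈ s, μ (X i ∩ X j)) ^ (1/(2:ℝ))) *
        (μ U ^ (1/(2:ℝ)) * (∑ i ∈ s, ∑ j ∈ s, μ (X i ∩ X j)) ^ (1/(2:ℝ))) :=
        mul_le_mul' holder holder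
    _ = (μ U ^ (1/(2:ℝ)) * μ U ^ (1/(2:ℝ))) *
        ((∑ i ∈ s, ∑ j ∈ s, μ (X i ∩ X j)) ^ (1/(2:ℝ)) *
         (∑ i ∈ s, ∑ j ∈ s, μ (X i ∩ X j)) ^ (1/(2:ℝ))) := by ring
    _ = μ U * ∑ i ∈ s, ∑ j ∈ s, μ (X i ∩ X j) := by
        rw [← ENNReal.rpow_add_of_nonneg _ _ (by norm_num) (by norm_num),
            ← ENNReal.rpow_add_of_nonneg _ _ (by norm_num) (by norm_num)]
        norm_num

set_option maxHeartbeats 1000000 in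
/-- Generalized Borel–Cantelli lemma (pairwise almost independent events). -/
theorem generalized_borel_cantelli {Ω : Type*} [MeasurableSpace Ω]
    (μ : Measure Ω) [IsProbabilityMeasure μ]
    (X : ℕ → Set Ω) (hmeas : ∀ n, MeasurableSet (X n))
    (d : ℕ) (hd : 1 ≤ d) (c : ℝ) (hc : 1 < c)
    (hindep : ∀ m n : ℕ, 1 ≤ m → m + d ≤ n →
      μ (X m ∩ X n) < ENNReal.ofReal c * μ (X m) * μ (X n)) :
    ((∑' n : ℕ, μ (X n)) = ⊤ →
      ENNReal.ofReal (1 / (4 * c)) ≤ μ (limsup X atTop)) ∧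
    (∀ Y : ℕ → Set Ω, (∀ n, MeasurableSet (Y n)) →
      (∑' n : ℕ, μ (Y n)) ≠ ⊤ → μ (limsup Y atTop) = 0) := by
  classical
  constructor
  · intro hsum
    set C : ℝ≥0∞ := ENNReal.ofReal c with hC
    have hc0 : (0:ℝ) < c := lt_trans one_pos hc
    have hC1 : 1 ≤ C := by
      rw [hC, ← ENNReal.ofReal_one]
      exact ENNReal.ofReal_le_ofReal hc.le
    have hCtop : C ≠ ⊤ := ENNReal.ofReal_ne_top
    have hC0 : C ≠ 0 := (ENNReal.ofReal_pos.2 hc0).ne'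
    -- main claim for each tail
    have key : ∀ m : ℕ, ENNReal.ofReal (1 / (4 * c)) ≤ μ (⋃ n, ⋃ (_ : m ≤ n), X n) := by
      intro m
      set m' : ℕ := max m 1 with hm'
      -- tail sum diverges
      have htail : (∑' k : ℕ, μ (X (k + m'))) = ⊤ := by
        have hhead : (∑ i ∈ Finset.range m', μ (X i)) ≠ ⊤ :=
          (ENNReal.sum_lt_top.2 fun i _ => measure_lt_top μ _).ne
        have hh : (∑ i ∈ Finset.range m', μ (X i)) + ∑' k : ℕ, μ (X (k + m')) = ⊤ := by
          rw [Summable.sum_add_tsum_nat_add' (f := fun n => μ (X n)) (k := m') ENNReal.summable, hsum]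
        by_contra hne
        exact (ENNReal.add_ne_top.2 ⟨hhead, hne⟩) hh
      -- find a finset with large sum
      obtain ⟨t, ht⟩ : ∃ t : Finset ℕ, ((2 * d : ℕ) : ℝ≥0∞) ≤ ∑ k ∈ t, μ (X (k + m')) := by
        have hlt : ((2 * d : ℕ) : ℝ≥0∞) < ⨆ u : Finset ℕ, ∑ k ∈ u, μ (X (k + m')) := by
          rw [← ENNReal.tsum_eq_iSup_sum, htail]
          exact ENNReal.natCast_lt_top _
        obtain ⟨t, ht⟩ := lt_iSup_iff.1 hlt
        exact ⟨t, ht.le⟩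
      set s : Finset ℕ := t.image (· + m') with hs
      have hsum_s : ∑ i ∈ s, μ (X i) = ∑ k ∈ t, μ (X (k + m')) :=
        Finset.sum_image fun a _ b _ h => by omega
      set S : ℝ≥0∞ := ∑ i ∈ s, μ (X i) with hSdef
      have hS2d : ((2 * d : ℕ) : ℝ≥0∞) ≤ S := by rw [hsum_s]; exact ht
      have hione : ∀ i ∈ s, 1 ≤ i := by
        intro i hi
        obtain ⟨k, _, rfl⟩ := Finset.mem_image.1 hi
        omega
      have himem : ∀ i ∈ s, m ≤ i := by
        intro i hi
        obtain ⟨k, _, rfl⟩ := Finset.mem_image.1 hi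
        omega
      have hSfin : S ≠ ⊤ := (ENNReal.sum_lt_top.2 fun i _ => measure_lt_top μ _).ne
      have hS0 : S ≠ 0 := by
        intro h
        rw [h] at hS2d
        have h2d0 : ((2 * d : ℕ) : ℝ≥0∞) ≠ 0 := Nat.cast_ne_zero.2 (by omega)
        exact h2d0 (le_antisymm hS2d zero_le)
      -- bound on the double sum
      have hT : (∑ i ∈ s, ∑ j ∈ s, μ (X i ∩ X j)) ≤ 2 * C * (S * S) := by
        have hpoint : ∀ i ∈ s, ∀ j ∈ s, μ (X i ∩ X j) ≤
            (if j < i + d ∧ i < j + d then μ (X i) else 0) + C * μ (X i) * μ (X j) := by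
          intro i hi j hj
          by_cases h : j < i + d ∧ i < j + d
          · simp only [if_pos h]
            exact le_add_right (measure_mono Set.inter_subset_left)
          · simp only [if_neg h, zero_add]
            rcases (by omega : i + d ≤ j ∨ j + d ≤ i) with h' | h'
            · exact (hindep i j (hione i hi) h').le
            · rw [Set.inter_comm]
              calc μ (X j ∩ X i) ≤ C * μ (X j) * μ (X i) := (hindep j i (hione j hj) h').le
                _ = C * μ (X i) * μ (X j) := by ring
        have hnear : ∀ i ∈ s,
            (∑ j ∈ s, (if j < i + d ∧ i < j + d then μ (X i) else 0))
              ≤ ((2 * d : ℕ) : ℝ≥0∞) * μ (X i) := by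
          intro i _
          rw [← Finset.sum_filter]
          rw [Finset.sum_const, nsmul_eq_mul]
          have hsub : s.filter (fun j => j < i + d ∧ i < j + d)
              ⊆ Finset.Ico (i + 1 - d) (i + d) := by
            intro j hj
            rw [Finset.mem_filter] at hj
            rw [Finset.mem_Ico]
            omega
          have hcard : (s.filter (fun j => j < i + d ∧ i < j + d)).card ≤ 2 * d := by
            have h1 := Finset.card_le_card hsub
            rw [Nat.card_Ico] at h1
            omega
          exact mul_le_mul_left (Nat.cast_le.2 hcard) _
        have hfar : ∀ i ∈ s, ∑ j ∈ s, C * μ (X i) * μ (X j) = C * μ (X i) * S := by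
          intro i _
          rw [hSdef, Finset.mul_sum]
        calc (∑ i ∈ s, ∑ j ∈ s, μ (X i ∩ X j))
            ≤ ∑ i ∈ s, ∑ j ∈ s,
              ((if j < i + d ∧ i < j + d then μ (X i) else 0) + C * μ (X i) * μ (X j)) :=
              Finset.sum_le_sum fun i hi => Finset.sum_le_sum fun j hj => hpoint i hi j hj
          _ = (∑ i ∈ s, ∑ j ∈ s, (if j < i + d ∧ i < j + d then μ (X i) else 0))
              + ∑ i ∈ s, ∑ j ∈ s, C * μ (X i) * μ (X j) := by
              rw [← Finset.sum_add_distrib]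
              exact Finset.sum_congr rfl fun i _ => Finset.sum_add_distrib
          _ ≤ ((2 * d : ℕ) : ℝ≥0∞) * S + C * S * S := by
              gcongr ?_ + ?_
              · calc (∑ i ∈ s, ∑ j ∈ s, (if j < i + d ∧ i < j + d then μ (X i) else 0))
                    ≤ ∑ i ∈ s, ((2 * d : ℕ) : ℝ≥0∞) * μ (X i) := Finset.sum_le_sum hnear
                  _ = ((2 * d : ℕ) : ℝ≥0∞) * S := by rw [hSdef, Finset.mul_sum]
              · rw [Finset.sum_congr rfl hfar]
                rw [show (∑ i ∈ s, C * μ (X i) * S) = (∑ i ∈ s, C * μ (X i)) * S from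
                  (Finset.sum_mul _ _ _).symm, ← Finset.mul_sum, ← hSdef]
          _ ≤ C * S * S + C * S * S := by
              gcongr ?_ + ?_
              · calc ((2 * d : ℕ) : ℝ≥0∞) * S ≤ S * S := mul_le_mul_left hS2d _
                  _ ≤ C * S * S := by
                    rw [mul_assoc]
                    exact le_mul_of_one_le_left zero_le hC1
              · exact le_rfl
          _ = 2 * C * (S * S) := by ring
      -- combine with Chung–Erdős
      have hce := chung_erdos μ X hmeas s
      set U : Set Ω := ⋃ i ∈ s, X i with hUdef
      have hcomb : S * S ≤ μ U * (2 * C * (S * S)) :=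
        le_trans hce (by gcongr)
      have h1le : 1 ≤ μ U * (2 * C) := by
        have h2 : (1:ℝ≥0∞) * (S * S) ≤ (μ U * (2 * C)) * (S * S) := by
          calc (1:ℝ≥0∞) * (S * S) = S * S := one_mul _
            _ ≤ μ U * (2 * C * (S * S)) := hcomb
            _ = (μ U * (2 * C)) * (S * S) := by ring
        exact (ENNReal.mul_le_mul_iff_left (mul_ne_zero hS0 hS0)
          (ENNReal.mul_ne_top hSfin hSfin)).1 h2
      have h2C0 : (2 * C : ℝ≥0∞) ≠ 0 := by simp [hC0]
      have h2Ctop : (2 * C : ℝ≥0∞) ≠ ⊤ := by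
        exact ENNReal.mul_ne_top (by simp) hCtop
      have hinv : (2 * C : ℝ≥0∞)⁻¹ ≤ μ U := by
        have h3 := mul_le_mul_left h1le (2 * C)⁻¹
        rwa [one_mul, mul_assoc, ENNReal.mul_inv_cancel h2C0 h2Ctop, mul_one] at h3
      have hUge : ENNReal.ofReal (1 / (4 * c)) ≤ μ U := by
        refine le_trans ?_ hinv
        have h2C : (2 * C : ℝ≥0∞) = ENNReal.ofReal (2 * c) := by
          rw [ENNReal.ofReal_mul (by norm_num), hC, ENNReal.ofReal_ofNat]
        rw [h2C, ← ENNReal.ofReal_inv_of_pos (by linarith)]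
        refine ENNReal.ofReal_le_ofReal ?_
        rw [one_div]
        gcongr
        linarith
      refine le_trans hUge (measure_mono ?_)
      exact Set.iUnion₂_subset fun i hi => Set.subset_iUnion₂ (s := fun n (_ : m ≤ n) => X n) i (himem i hi)
    -- pass to the limit
    have hlim : limsup X atTop = ⋂ m, ⋃ n, ⋃ (_ : m ≤ n), X n := by
      rw [limsup_eq_iInf_iSup_of_nat]
      rfl
    rw [hlim]
    rw [Directed.measure_iInter
      (fun m => (MeasurableSet.iUnion fun n =>
        MeasurableSet.iUnion fun _ => hmeas n).nullMeasurableSet)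
      (fun a b => ⟨max a b,
        Set.iUnion₂_subset fun i hi => Set.subset_iUnion₂ (s := fun n (_ : a ≤ n) => X n) i
          (le_trans (le_max_left a b) hi),
        Set.iUnion₂_subset fun i hi => Set.subset_iUnion₂ (s := fun n (_ : b ≤ n) => X n) i
          (le_trans (le_max_right a b) hi)⟩)
      ⟨0, measure_ne_top μ _⟩]
    exact le_iInf key
  · intro Y _ hY
    exact measure_limsup_atTop_eq_zero hY
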